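/- Let G be a group, H ≤ G, and S ⊆ G a Bol loop folder: 1 ∈ S, sts ∈ S for all s,t ∈ S, and S is a system of left coset representatives for every conjugate H^g of H in G. Define s∘t to be the unique element of stH ∩ S. Then (S, ∘) is a left Bol loop with identity 1. -/
import Mathlib


/-- A Bol loop folder `(G,H,S)` yields a left Bol loop structure on `S` with
identity `1`, where `s ∘ t` is the unique element of `stH ∩ S`. -/
theorem stmt4 (G : Type) [Group G] (H : Subgroup G) (S : Set G)
    (h1 : (1 : G) ∈ S)
    (hsts : ∀ s ∈ S, ∀ t ∈ S, s * t * s ∈ S)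
    (htrans : ∀ g a : G, ∃! x : G, x ∈ S ∧ ∃ h ∈ H, x = a * (g⁻¹ * h * g)) :
    ∃ m : S → S → S,
      (∀ s t : S, ∃ h ∈ H, ((m s t : G)) = (s : G) * (t : G) * h) ∧
      (∀ t : S, m ⟨1, h1⟩ t = t) ∧
      (∀ t : S, m t ⟨1, h1⟩ = t) ∧
      (∀ s : S, Function.Bijective (m s)) ∧
      (∀ t : S, Function.Bijective (fun s => m s t)) ∧
      (∀ x y z : S, m x (m y (m x z)) = m (m x (m y x)) z) := by
  classical
  -- uniqueness in left cosets of H itself (g = 1)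
  have key : ∀ a : G, ∃! x : G, x ∈ S ∧ a⁻¹ * x ∈ H := by
    intro a
    obtain ⟨x, ⟨hxS, h, hH, hx⟩, huniq⟩ := htrans 1 a
    refine ⟨x, ⟨hxS, ?_⟩, ?_⟩
    · have e : a⁻¹ * x = h := by rw [hx]; group
      rw [e]; exact hH
    · rintro y ⟨hyS, hy⟩
      exact huniq y ⟨hyS, a⁻¹ * y, hy, by group⟩
  -- uniqueness in left cosets of conjugates H^(t⁻¹)
  have key2 : ∀ t a : G, ∃! x : G, x ∈ S ∧ t⁻¹ * (a⁻¹ * x) * t ∈ H := by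
    intro t a
    obtain ⟨x, ⟨hxS, h, hH, hx⟩, huniq⟩ := htrans t⁻¹ a
    refine ⟨x, ⟨hxS, ?_⟩, ?_⟩
    · have e : t⁻¹ * (a⁻¹ * x) * t = h := by rw [hx]; group
      rw [e]; exact hH
    · rintro y ⟨hyS, hy⟩
      exact huniq y ⟨hyS, t⁻¹ * (a⁻¹ * y) * t, hy, by group⟩
  set f : G → G := fun a => (key a).choose with hf
  have hfS : ∀ a, f a ∈ S := fun a => (key a).choose_spec.1.1
  have hfH : ∀ a, a⁻¹ * f a ∈ H := fun a => (key a).choose_spec.1.2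
  have hfU : ∀ a x, x ∈ S → a⁻¹ * x ∈ H → x = f a :=
    fun a x hx h => (key a).choose_spec.2 x ⟨hx, h⟩
  have fid : ∀ x, x ∈ S → f x = x := fun x hx =>
    (hfU x x hx (by rw [inv_mul_cancel]; exact H.one_mem)).symm
  refine ⟨fun s t => ⟨f ((s : G) * (t : G)), hfS _⟩, ?_, ?_, ?_, ?_, ?_, ?_⟩
  · -- m s t ∈ stH
    intro s t
    refine ⟨((s : G) * t)⁻¹ * f ((s : G) * t), hfH _, by group⟩
  · -- left identity
    intro t
    apply Subtype.ext
    show f ((1 : G) * t) = t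
    refine (hfU _ _ t.2 ?_).symm
    have e : ((1 : G) * t)⁻¹ * (t : G) = 1 := by group
    rw [e]; exact H.one_mem
  · -- right identity
    intro t
    apply Subtype.ext
    show f ((t : G) * 1) = t
    refine (hfU _ _ t.2 ?_).symm
    have e : ((t : G) * 1)⁻¹ * (t : G) = 1 := by group
    rw [e]; exact H.one_mem
  · -- left translations bijective
    intro s
    constructor
    · intro t t' h
      have heq : f ((s : G) * t) = f ((s : G) * t') := congrArg Subtype.val h
      have A : ((s : G) * t)⁻¹ * f ((s : G) * t') ∈ H := heq ▸ hfH ((s : G) * t)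
      have B : ((s : G) * t')⁻¹ * f ((s : G) * t') ∈ H := hfH _
      have e : (t : G)⁻¹ * t' =
          (((s : G) * t)⁻¹ * f ((s : G) * t')) * (((s : G) * t')⁻¹ * f ((s : G) * t'))⁻¹ := by
        group
      have ht' : (t' : G) = f (t : G) := hfU _ _ t'.2 (by rw [e]; exact mul_mem A (inv_mem B))
      apply Subtype.ext
      rw [ht', fid _ t.2]
    · intro u
      refine ⟨⟨f ((s : G)⁻¹ * u), hfS _⟩, ?_⟩
      apply Subtype.ext
      show f ((s : G) * f ((s : G)⁻¹ * u)) = u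
      refine (hfU _ _ u.2 ?_).symm
      have e : ((s : G) * f ((s : G)⁻¹ * u))⁻¹ * (u : G) =
          (((s : G)⁻¹ * u)⁻¹ * f ((s : G)⁻¹ * u))⁻¹ := by group
      rw [e]; exact inv_mem (hfH _)
  · -- right translations bijective
    intro t
    constructor
    · intro s s' h
      have heq : f ((s' : G) * t) = f ((s : G) * t) := (congrArg Subtype.val h).symm
      have A : ((s : G) * t)⁻¹ * f ((s : G) * t) ∈ H := hfH _
      have B : ((s' : G) * t)⁻¹ * f ((s : G) * t) ∈ H := heq ▸ hfH ((s' : G) * t)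
      refine Subtype.ext ((key2 (t : G) (s' : G)).unique ⟨s.2, ?_⟩ ⟨s'.2, ?_⟩)
      · have e : (t : G)⁻¹ * ((s' : G)⁻¹ * s) * t =
            (((s' : G) * t)⁻¹ * f ((s : G) * t)) * (((s : G) * t)⁻¹ * f ((s : G) * t))⁻¹ := by
          group
        rw [e]; exact mul_mem B (inv_mem A)
      · have e : (t : G)⁻¹ * ((s' : G)⁻¹ * s') * t = 1 := by group
        rw [e]; exact H.one_mem
    · intro u
      obtain ⟨x, ⟨hxS, hx⟩, -⟩ := key2 (t : G) ((u : G) * (t : G)⁻¹)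
      refine ⟨⟨x, hxS⟩, ?_⟩
      apply Subtype.ext
      show f (x * (t : G)) = u
      refine (hfU _ _ u.2 ?_).symm
      have e : (x * (t : G))⁻¹ * (u : G) =
          ((t : G)⁻¹ * (((u : G) * (t : G)⁻¹)⁻¹ * x) * (t : G))⁻¹ := by group
      rw [e]; exact inv_mem hx
  · -- left Bol identity
    intro x y z
    apply Subtype.ext
    show f ((x : G) * f ((y : G) * f ((x : G) * z))) = f (f ((x : G) * f ((y : G) * x)) * z)
    have hA : f ((x : G) * f ((y : G) * x)) = (x : G) * y * x := by
      refine (hfU _ _ (hsts x x.2 y y.2) ?_).symm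
      have e : ((x : G) * f ((y : G) * x))⁻¹ * ((x : G) * y * x) =
          (((y : G) * x)⁻¹ * f ((y : G) * x))⁻¹ := by group
      rw [e]; exact inv_mem (hfH _)
    have hL : f ((x : G) * f ((y : G) * f ((x : G) * z))) = f ((x : G) * y * x * z) := by
      refine hfU _ _ (hfS _) ?_
      have e : ((x : G) * y * x * z)⁻¹ * f ((x : G) * f ((y : G) * f ((x : G) * z))) =
          (((x : G) * z)⁻¹ * f ((x : G) * z)) *
            ((((y : G) * f ((x : G) * z))⁻¹ * f ((y : G) * f ((x : G) * z))) *
              (((x : G) * f ((y : G) * f ((x : G) * z)))⁻¹ *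
                f ((x : G) * f ((y : G) * f ((x : G) * z))))) := by group
      rw [e]
      exact mul_mem (hfH _) (mul_mem (hfH _) (hfH _))
    rw [hL, hA]
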